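/- Let V be a finite nonempty vertex type and E : V → V → Prop an edge relation. Then every vertex v ∈ V occurs on some prime path of (V, E); consequently prime path coverage subsumes node coverage. -/

import Mathlib

/-- A (directed) path in the graph `(V, E)`: a nonempty list of vertices in which
consecutive vertices are related by the edge relation `E`. -/
def IsPath {V : Type*} (E : V → V → Prop) (l : List V) : Prop :=
  l ≠ [] ∧ l.Chain' E

/-- A simple path: a path in which no vertex occurs more than once,
except that the first and last vertices may coincide. -/
def IsSimplePath {V : Type*} (E : V → V → Prop) (l : List V) : Prop :=
  IsPath E l ∧ l.dropLast.Nodup ∧ l.tail.Nodup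

/-- A closed path: it has at least two vertices and its first and last vertices coincide. -/
def IsClosedPath {V : Type*} (l : List V) : Prop :=
  2 ≤ l.length ∧ l.head? = l.getLast?

/-- A prime path: a maximal simple path, i.e. a simple path that is not a proper
subpath (contiguous sublist) of any simple path. -/
def IsPrimePath {V : Type*} (E : V → V → Prop) (l : List V) : Prop :=
  IsSimplePath E l ∧ ∀ q : List V, IsSimplePath E q → l <:+: q → l = q

/-- In a finite nonempty graph, every vertex occurs on some prime path
(prime path coverage subsumes node coverage). -/
theorem vertex_mem_primePath {V : Type*} [Fintype V] [Nonempty V]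
    (E : V → V → Prop) (v : V) :
    ∃ p : List V, IsPrimePath E p ∧ v ∈ p := by
  have bound : ∀ l : List V, IsSimplePath E l → l.length ≤ Fintype.card V + 1 := by
    intro l hl
    have h1 : l.dropLast.length ≤ Fintype.card V := hl.2.1.length_le_card
    have h2 : l.dropLast.length = l.length - 1 := List.length_dropLast
    omega
  have aux : ∀ n (p : List V), Fintype.card V + 1 - p.length ≤ n → IsSimplePath E p →
      ∃ q, IsPrimePath E q ∧ p <:+: q := by
    intro n
    induction n with
    | zero =>
      intro p hp hsp
      by_cases hprime : IsPrimePath E p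
      · exact ⟨p, hprime, List.infix_refl p⟩
      · exfalso
        simp only [IsPrimePath, not_and, not_forall] at hprime
        obtain ⟨q, hq, hinf, hne⟩ := hprime hsp
        have hlt : p.length < q.length :=
          lt_of_le_of_ne hinf.sublist.length_le (fun h => hne (hinf.sublist.eq_of_length h))
        have := bound q hq
        omega
    | succ n ih =>
      intro p hp hsp
      by_cases hprime : IsPrimePath E p
      · exact ⟨p, hprime, List.infix_refl p⟩
      · simp only [IsPrimePath, not_and, not_forall] at hprime
        obtain ⟨q, hq, hinf, hne⟩ := hprime hsp
        have hlt : p.length < q.length :=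
          lt_of_le_of_ne hinf.sublist.length_le (fun h => hne (hinf.sublist.eq_of_length h))
        obtain ⟨r, hr, hinf'⟩ := ih q (by omega) hq
        exact ⟨r, hr, hinf.trans hinf'⟩
  have hsv : IsSimplePath E [v] := by
    refine ⟨⟨by simp, List.isChain_singleton v⟩, by simp, by simp⟩
  obtain ⟨q, hq, hinf⟩ := aux (Fintype.card V + 1) [v] (by omega) hsv
  exact ⟨q, hq, hinf.mem (by simp)⟩
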